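/- Let r and s be coprime integers with 2 ≤ r < s, g = (r−1)(s−1)/2, N the increasing enumeration of the numerical semigroup generated by r and s, and Λ_i = g − N(i−1) + (i−1) for i = 1, …, g. Then Λ = (Λ_1, …, Λ_g) is a partition (Λ_1 ≥ Λ_2 ≥ … ≥ Λ_g ≥ 1) which is self-conjugate: its conjugate partition Λ′, defined by Λ′_j = #{i : Λ_i ≥ j}, equals Λ. -/

import Mathlib

/-- Membership in the numerical semigroup generated by `r` and `s`. -/
def inSg (r s n : ℕ) : Prop := ∃ a b : ℕ, n = a * r + b * s

/-- The Young diagram row lengths `Λ i = g - N(i-1) + (i-1)` attached to the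
Weierstrass gap sequence. -/
def Lam (g : ℕ) (N : ℕ → ℕ) (i : ℕ) : ℕ := g + (i - 1) - N (i - 1)

open Finset

namespace SelfConjAux

open scoped Classical

lemma inSg_zero (r s : ℕ) : inSg r s 0 := ⟨0, 0, by simp⟩

lemma inSg_add {r s m n : ℕ} (hm : inSg r s m) (hn : inSg r s n) :
    inSg r s (m + n) := by
  obtain ⟨a, b, rfl⟩ := hm; obtain ⟨c, d, rfl⟩ := hn
  exact ⟨a + c, b + d, by ring⟩

lemma inSg_int {r s n : ℕ} (a b : ℤ) (ha : 0 ≤ a) (hb : 0 ≤ b)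
    (h : (n : ℤ) = a * r + b * s) : inSg r s n := by
  refine ⟨a.toNat, b.toNat, ?_⟩
  have h2 : (n : ℤ) = ((a.toNat * r + b.toNat * s : ℕ) : ℤ) := by
    push_cast [Int.toNat_of_nonneg ha, Int.toNat_of_nonneg hb]
    linarith
  exact_mod_cast h2

/-- The Frobenius number is not in the semigroup. -/
lemma frob_not {r s F : ℕ} (hr : 2 ≤ r) (hrs : r < s) (hco : Nat.Coprime r s)
    (hF : r + s + F = r * s) : ¬ inSg r s F := by
  rintro ⟨a, b, h⟩
  have h2 : (a + 1) * r + (b + 1) * s = r * s := by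
    calc (a + 1) * r + (b + 1) * s = a * r + b * s + (r + s) := by ring
      _ = F + (r + s) := by rw [h]
      _ = r * s := by omega
  have hdr : r ∣ (b + 1) * s := by
    have h3 : r ∣ (a + 1) * r + (b + 1) * s := h2 ▸ Dvd.intro s rfl
    exact (Nat.dvd_add_right ⟨a + 1, mul_comm _ _⟩).mp h3
  have hds : s ∣ (a + 1) * r := by
    have h3 : s ∣ (a + 1) * r + (b + 1) * s := h2 ▸ ⟨r, mul_comm _ _⟩
    exact (Nat.dvd_add_iff_left ⟨b + 1, mul_comm _ _⟩).mpr h3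
  have hb1 : r ≤ b + 1 :=
    Nat.le_of_dvd (by omega) (hco.dvd_of_dvd_mul_right hdr)
  have ha1 : s ≤ a + 1 :=
    Nat.le_of_dvd (by omega) (hco.symm.dvd_of_dvd_mul_right hds)
  have k1 : s * r ≤ (a + 1) * r := Nat.mul_le_mul_right r ha1
  have k2 : r * s ≤ (b + 1) * s := Nat.mul_le_mul_right s hb1
  have k3 : 0 < s * r := Nat.mul_pos (by omega) (by omega)
  have : s * r + r * s ≤ r * s := by calc
    s * r + r * s ≤ (a + 1) * r + (b + 1) * s := Nat.add_le_add k1 k2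
    _ = r * s := h2
  omega

/-- Symmetry of the semigroup: `n ∈ S ↔ F - n ∉ S` for `n ≤ F`. -/
lemma sym_mem {r s F : ℕ} (hr : 2 ≤ r) (hrs : r < s) (hco : Nat.Coprime r s)
    (hF : r + s + F = r * s) {n : ℕ} (hn : n ≤ F) :
    inSg r s n ↔ ¬ inSg r s (F - n) := by
  constructor
  · intro h1 h2
    have h3 := inSg_add h1 h2
    rw [Nat.add_sub_cancel' hn] at h3
    exact frob_not hr hrs hco hF h3
  · intro h1
    by_contra h2
    apply h1
    -- Bezout
    have hBez : (r : ℤ) * Nat.gcdA r s + s * Nat.gcdB r s = 1 := by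
      have := Nat.gcd_eq_gcd_ab r s
      rw [hco] at this
      exact_mod_cast this.symm
    set A := Nat.gcdA r s
    set B := Nat.gcdB r s
    have hs0 : (0 : ℤ) < s := by exact_mod_cast (by omega : 0 < s)
    obtain ⟨a, ha0, has, t, hat⟩ :
        ∃ a : ℤ, 0 ≤ a ∧ a < s ∧ ∃ t : ℤ, a * r - n = t * s := by
      refine ⟨(n * A) % s, Int.emod_nonneg _ (by omega), Int.emod_lt_of_pos _ hs0,
        -(n * B + (n * A / s) * r), ?_⟩
      rw [Int.emod_def]
      linear_combination (n : ℤ) * hBez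
    have ht1 : 1 ≤ t := by
      by_contra ht
      push_neg at ht
      exact h2 (inSg_int a (-t) ha0 (by omega) (by linarith))
    have hFZ : (r : ℤ) + s + F = r * s := by exact_mod_cast hF
    refine inSg_int (s - 1 - a) (t - 1) (by omega) (by omega) ?_
    have hcast : ((F - n : ℕ) : ℤ) = (F : ℤ) - n := by omega
    rw [hcast]
    linear_combination hat + hFZ

lemma cut_unique {p : ℕ → Prop} {K1 K2 : ℕ}
    (h1 : ∀ n, p n ↔ n < K1) (h2 : ∀ n, p n ↔ n < K2) : K1 = K2 := by
  rcases lt_trichotomy K1 K2 with h | h | h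
  · exact absurd ((h1 K1).mp ((h2 K1).mpr h)) (lt_irrefl K1)
  · exact h
  · exact absurd ((h2 K2).mp ((h1 K2).mpr h)) (lt_irrefl K2)

/-- counting lemma: `N n < x ↔ n < #(S ∩ [0,x))`. -/
lemma count_iff {r s : ℕ} {N : ℕ → ℕ} (hmono : StrictMono N)
    (hmem : ∀ n, inSg r s (N n)) (hsurj : ∀ m, inSg r s m → ∃ n, N n = m)
    (x : ℕ) : ∀ n, N n < x ↔ n < ((range x).filter (inSg r s)).card := by
  have hne : {n | x ≤ N n}.Nonempty := ⟨x, hmono.le_apply⟩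
  obtain ⟨K, hKmem, hKle⟩ : ∃ K, x ≤ N K ∧ ∀ n, x ≤ N n → K ≤ n :=
    ⟨sInf {n | x ≤ N n}, Nat.sInf_mem hne, fun n hn => Nat.sInf_le hn⟩
  have hK1 : ∀ n, n < K → N n < x := by
    intro n hn
    by_contra h
    exact absurd (hKle n (not_lt.mp h)) (not_le.mpr hn)
  have hK2 : ∀ n, K ≤ n → x ≤ N n := by
    intro n hn
    exact le_trans hKmem (hmono.monotone hn)
  have himg : (range x).filter (inSg r s) = (range K).image N := by
    ext m
    simp only [mem_filter, mem_image, mem_range]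
    constructor
    · rintro ⟨hmx, hm⟩
      obtain ⟨n, rfl⟩ := hsurj m hm
      refine ⟨n, ?_, rfl⟩
      by_contra h
      exact absurd (hK2 n (not_lt.mp h)) (not_le.mpr hmx)
    · rintro ⟨n, hn, rfl⟩
      exact ⟨hK1 n hn, hmem n⟩
  have hcard : ((range x).filter (inSg r s)).card = K := by
    rw [himg, card_image_of_injective _ hmono.injective, card_range]
  intro n
  rw [hcard]
  constructor
  · intro h
    by_contra h'
    exact absurd (hK2 n (not_lt.mp h')) (not_le.mpr h)
  · exact hK1 n

end SelfConjAux

open SelfConjAux in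
open scoped Classical in
/-- `Λ = (Λ_1, …, Λ_g)` is a partition (weakly decreasing with all parts ≥ 1)
which is self-conjugate: the conjugate partition `Λ'_j = #{i : Λ_i ≥ j}`
equals `Λ` (including the vanishing of parts beyond the `g`-th). -/
theorem young_diagram_self_conjugate (r s g : ℕ) (N : ℕ → ℕ)
    (hr : 2 ≤ r) (hrs : r < s) (hco : Nat.Coprime r s)
    (hg : 2 * g = (r - 1) * (s - 1))
    (hmono : StrictMono N)
    (hmem : ∀ n, inSg r s (N n))
    (hsurj : ∀ m, inSg r s m → ∃ n, N n = m) :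
    (∀ i j : ℕ, 1 ≤ i → i ≤ j → j ≤ g → Lam g N j ≤ Lam g N i) ∧
    1 ≤ Lam g N g ∧
    (∀ j : ℕ, 1 ≤ j → j ≤ g →
      ((Finset.Icc 1 g).filter (fun i => j ≤ Lam g N i)).card = Lam g N j) ∧
    (∀ j : ℕ, g < j →
      ((Finset.Icc 1 g).filter (fun i => j ≤ Lam g N i)).card = 0) := by
  -- basic numerics
  have hg1 : 1 ≤ g := by
    have h2 : 1 * 2 ≤ (r - 1) * (s - 1) :=
      Nat.mul_le_mul (by omega) (by omega)
    omega
  have hF : r + s + (2 * g - 1) = r * s := by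
    have h1 : (1 : ℕ) ≤ r := by omega
    have h2 : (1 : ℕ) ≤ s := by omega
    have hgZ : (2 * g : ℤ) = ((r : ℤ) - 1) * ((s : ℤ) - 1) := by
      have h3 := hg
      zify [h1, h2] at h3
      linarith
    zify [show (1 : ℕ) ≤ 2 * g by omega]
    linear_combination hgZ
  -- abbreviation for the count
  set c : ℕ → ℕ := fun x => ((range x).filter (inSg r s)).card with hc
  have hcnt : ∀ x n, N n < x ↔ n < c x := fun x => count_iff hmono hmem hsurj x
  -- N 0 = 0
  have hN0 : N 0 = 0 := by
    obtain ⟨n, hn⟩ := hsurj 0 (inSg_zero r s)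
    have := hmono.monotone (Nat.zero_le n)
    omega
  -- N k ≥ k
  have hNk : ∀ k, k ≤ N k := fun k => hmono.le_apply
  -- the symmetry, instantiated
  have hsym : ∀ n ≤ 2 * g - 1, (inSg r s n ↔ ¬ inSg r s (2 * g - 1 - n)) :=
    fun n hn => sym_mem hr hrs hco hF hn
  -- c (2g) = g
  have hc2g : c (2 * g) = g := by
    have hcards : ((range (2 * g)).filter (inSg r s)).card
        = ((range (2 * g)).filter (fun m => ¬ inSg r s m)).card := by
      refine card_nbij' (fun m => 2 * g - 1 - m) (fun m => 2 * g - 1 - m)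
        ?_ ?_ ?_ ?_
      · intro m hm
        simp only [Finset.mem_coe, mem_filter, mem_range] at hm ⊢
        exact ⟨by omega, (hsym m (by omega)).mp hm.2⟩
      · intro m hm
        simp only [Finset.mem_coe, mem_filter, mem_range] at hm ⊢
        refine ⟨by omega, ?_⟩
        have h2 := hsym (2 * g - 1 - m) (by omega)
        rw [show 2 * g - 1 - (2 * g - 1 - m) = m by omega] at h2
        exact h2.mpr hm.2
      · intro m hm
        simp only [Finset.mem_coe, mem_filter, mem_range] at hm
        dsimp only
        omega
      · intro m hm
        simp only [Finset.mem_coe, mem_filter, mem_range] at hm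
        dsimp only
        omega
    have hsum := card_filter_add_card_filter_not
      (s := range (2 * g)) (inSg r s)
    rw [card_range] at hsum
    simp only [hc]
    omega
  -- N k < 2g for k < g
  have hNlt : ∀ k, k < g → N k < 2 * g := by
    intro k hk
    rw [hcnt (2 * g) k, hc2g]; exact hk
  -- Frobenius not in S
  have hfrob : ¬ inSg r s (2 * g - 1) := frob_not hr hrs hco hF
  -- N k ≤ 2g - 2 for k < g
  have hNle : ∀ k, k < g → N k ≤ 2 * g - 2 := by
    intro k hk
    have h1 := hNlt k hk
    have h2 : N k ≠ 2 * g - 1 := fun h => hfrob (h ▸ hmem k)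
    omega
  -- c (N k + ...) values : c (m+1) = k+1 when m = N k
  have hcNk : ∀ k, c (N k + 1) = k + 1 := by
    intro k
    refine cut_unique (p := fun n => N n < N k + 1) (hcnt (N k + 1)) ?_
    intro n
    constructor
    · intro h
      have : N n ≤ N k := by omega
      have := hmono.le_iff_le.mp this
      omega
    · intro h
      have : n ≤ k := by omega
      have := hmono.monotone this
      omega
  -- N k ≤ k + g  for k < g
  have hNbd : ∀ k, k < g → N k ≤ k + g := by
    intro k hk
    have hclow : c (2 * g) ≤ c (N k + 1) + (2 * g - (N k + 1)) := by
      have hsplit : range (2 * g) = range (N k + 1) ∪ Ico (N k + 1) (2 * g) := by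
        simp only [range_eq_Ico]
        exact (Ico_union_Ico_eq_Ico (Nat.zero_le _) (by have := hNlt k hk; omega)).symm
      simp only [hc]
      rw [hsplit, filter_union]
      calc (((range (N k + 1)).filter (inSg r s)) ∪
            ((Ico (N k + 1) (2 * g)).filter (inSg r s))).card
          ≤ ((range (N k + 1)).filter (inSg r s)).card
            + ((Ico (N k + 1) (2 * g)).filter (inSg r s)).card := card_union_le _ _
        _ ≤ ((range (N k + 1)).filter (inSg r s)).card + (2 * g - (N k + 1)) := by
            have := card_filter_le (Ico (N k + 1) (2 * g)) (inSg r s)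
            rw [Nat.card_Ico] at this
            omega
    rw [hc2g, hcNk k] at hclow
    have := hNlt k hk
    omega
  -- key counting: c (2g - 1 - N k) = g + k - N k  for k < g
  have hkey : ∀ k, k < g → c (2 * g - 1 - N k) = g + k - N k := by
    intro k hk
    have hm2 : N k ≤ 2 * g - 2 := hNle k hk
    set m := N k with hmdef
    set x := 2 * g - 1 - m with hxdef
    -- d = number of gaps below x
    have hsum := card_filter_add_card_filter_not
      (s := range x) (inSg r s)
    rw [card_range] at hsum
    -- gaps below x ↔ S-elements in (m, 2g)
    have hbij : ((range x).filter (fun y => ¬ inSg r s y)).card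
        = ((Ico (m + 1) (2 * g)).filter (inSg r s)).card := by
      refine card_nbij' (fun y => 2 * g - 1 - y) (fun y => 2 * g - 1 - y)
        ?_ ?_ ?_ ?_
      · intro y hy
        simp only [Finset.mem_coe, mem_filter, mem_range, mem_Ico] at hy ⊢
        refine ⟨⟨by omega, by omega⟩, ?_⟩
        have h2 := hsym (2 * g - 1 - y) (by omega)
        rw [show 2 * g - 1 - (2 * g - 1 - y) = y by omega] at h2
        exact h2.mpr hy.2
      · intro y hy
        simp only [Finset.mem_coe, mem_filter, mem_range, mem_Ico] at hy ⊢
        obtain ⟨⟨hy1, hy2⟩, hy3⟩ := hy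
        exact ⟨by omega, (hsym y (by omega)).mp hy3⟩
      · intro y hy
        simp only [Finset.mem_coe, mem_filter, mem_range] at hy
        dsimp only
        omega
      · intro y hy
        simp only [Finset.mem_coe, mem_filter, mem_Ico] at hy
        dsimp only
        omega
    -- S-elements in (m, 2g) number g - (k+1)
    have hico : ((Ico (m + 1) (2 * g)).filter (inSg r s)).card = g - (k + 1) := by
      have hsplit : range (2 * g) = range (m + 1) ∪ Ico (m + 1) (2 * g) := by
        simp only [range_eq_Ico]
        exact (Ico_union_Ico_eq_Ico (Nat.zero_le _) (by omega)).symm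
      have hdisj : Disjoint ((range (m + 1)).filter (inSg r s))
          ((Ico (m + 1) (2 * g)).filter (inSg r s)) := by
        refine disjoint_filter_filter ?_
        rw [range_eq_Ico]
        exact Ico_disjoint_Ico_consecutive 0 (m + 1) (2 * g)
      have := hcNk k
      have h2 : c (2 * g) = c (m + 1)
          + ((Ico (m + 1) (2 * g)).filter (inSg r s)).card := by
        simp only [hc]
        rw [hsplit, filter_union, card_union_of_disjoint hdisj]
      rw [hc2g, hcNk k] at h2
      omega
    simp only [hc]
    have hle := hNk k
    omega
  -- the symmetric relation
  have hrel : ∀ k l, k < g → l < g →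
      (N k + l + 1 ≤ g + k ↔ N l + k + 1 ≤ g + l) := by
    have hhalf : ∀ k l, k < g → l < g →
        (N k + l + 1 ≤ g + k ↔ N k + N l ≤ 2 * g - 2) := by
      intro k l hk hl
      have h1 : (N l < 2 * g - 1 - N k) ↔ l < g + k - N k := by
        rw [hcnt (2 * g - 1 - N k) l, hkey k hk]
      have h2 := hNle k hk
      have h3 := hNle l hl
      have h4 := hNbd k hk
      have h5 := hNk k
      have h6 := hNk l
      omega
    intro k l hk hl
    rw [hhalf k l hk hl, hhalf l k hl hk]
    constructor <;> intro h <;> omega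
  -- Lam bounds
  have hLam : ∀ i, 1 ≤ i → i ≤ g → Lam g N i = g + (i - 1) - N (i - 1) := by
    intro i _ _; rfl
  have hLle : ∀ i, 1 ≤ i → i ≤ g → Lam g N i ≤ g := by
    intro i h1 h2
    have := hNk (i - 1)
    simp only [Lam]
    omega
  refine ⟨?_, ?_, ?_, ?_⟩
  · -- decreasing
    intro i j h1 h2 h3
    simp only [Lam]
    have hmono2 : N (i - 1) + (j - 1) - (i - 1) ≤ N (j - 1) := by
      have h4 : i - 1 ≤ j - 1 := by omega
      have h5 := hmono.monotone h4
      have key : ∀ a b : ℕ, a ≤ b → N a + b - a ≤ N b := by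
        intro a b hab
        induction b with
        | zero =>
          have ha : a = 0 := by omega
          subst ha
          omega
        | succ b ih =>
          rcases Nat.lt_or_ge a (b + 1) with h | h
          · have h7 : a ≤ b := by omega
            have h8 := ih h7
            have h9 : N b < N (b + 1) := hmono (by omega)
            omega
          · have : a = b + 1 := by omega
            subst this
            omega
      have := key (i - 1) (j - 1) h4
      omega
    omega
  · -- Lam g ≥ 1
    have h1 := hNle (g - 1) (by omega)
    simp only [Lam]
    omega
  · -- conjugate
    intro j hj1 hj2
    have hset : (Finset.Icc 1 g).filter (fun i => j ≤ Lam g N i)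
        = Finset.Icc 1 (Lam g N j) := by
      ext i
      simp only [mem_filter, Finset.mem_Icc]
      constructor
      · rintro ⟨⟨hi1, hi2⟩, hij⟩
        refine ⟨hi1, ?_⟩
        -- j ≤ Lam i ⇒ i ≤ Lam j
        have hb := hNbd (i - 1) (by omega)
        have hLi : N (i - 1) + j ≤ g + (i - 1) := by
          simp only [Lam] at hij
          omega
        have h2 := (hrel (i - 1) (j - 1) (by omega) (by omega)).mp (by omega)
        simp only [Lam]
        have := hNbd (j - 1) (by omega)
        omega
      · rintro ⟨hi1, hi2⟩
        have hLj : Lam g N j ≤ g := hLle j hj1 hj2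
        have hig : i ≤ g := le_trans hi2 hLj
        refine ⟨⟨hi1, hig⟩, ?_⟩
        have hb := hNbd (j - 1) (by omega)
        have hLi : N (j - 1) + i ≤ g + (j - 1) := by
          simp only [Lam] at hi2
          omega
        have h2 := (hrel (j - 1) (i - 1) (by omega) (by omega)).mp (by omega)
        simp only [Lam]
        have := hNbd (i - 1) (by omega)
        omega
    rw [hset, Nat.card_Icc]
    omega
  · -- vanishing beyond g
    intro j hj
    rw [card_eq_zero, filter_eq_empty_iff]
    intro i hi
    simp only [Finset.mem_Icc] at hi
    have := hLle i hi.1 hi.2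
    omega
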